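/- A bornological coarse space X admits an ample X-controlled Hilbert space if and only if X is locally countable, i.e. there exists an entourage V of X such that every V-separated subset of X is locally countable. -/

import Mathlib

/-- The `U`-thickening `U[B] := {x : ∃ b ∈ B, (x, b) ∈ U}` of a subset `B` by an
entourage `U`. -/
def thick {X : Type*} (U : Set (X × X)) (B : Set X) : Set X :=
  {x | ∃ b ∈ B, (x, b) ∈ U}

/-- Composition of relations: `U ∘ V`. -/
def relComp {X : Type*} (U V : Set (X × X)) : Set (X × X) :=
  {p | ∃ z, (p.1, z) ∈ U ∧ (z, p.2) ∈ V}

/-- `iterComp U n` is the `(n+1)`-fold composition `U ∘ U ∘ ⋯ ∘ U`. -/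
def iterComp {X : Type*} (U : Set (X × X)) : ℕ → Set (X × X)
  | 0 => U
  | n + 1 => relComp (iterComp U n) U

/-- A bornological coarse structure on a set `X`: a coarse structure (a collection of
entourages containing the diagonal and closed under subsets, finite unions, inverses and
compositions) together with a compatible bornology (a collection of bounded sets covering
`X` and closed under subsets and finite unions, such that controlled thickenings of bounded
sets are bounded). -/
structure BornCoarse (X : Type*) where
  /-- the entourages -/
  entourages : Set (Set (X × X))
  diag_mem : {p : X × X | p.1 = p.2} ∈ entourages
  subset_mem : ∀ ⦃U V : Set (X × X)⦄, U ∈ entourages → V ⊆ U → V ∈ entourages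
  union_mem : ∀ ⦃U V : Set (X × X)⦄, U ∈ entourages → V ∈ entourages → U ∪ V ∈ entourages
  inv_mem : ∀ ⦃U : Set (X × X)⦄, U ∈ entourages → {p : X × X | (p.2, p.1) ∈ U} ∈ entourages
  comp_mem : ∀ ⦃U V : Set (X × X)⦄, U ∈ entourages → V ∈ entourages →
    relComp U V ∈ entourages
  /-- the bounded subsets -/
  bounded : Set (Set X)
  covers : ∀ x : X, ∃ B ∈ bounded, x ∈ B
  empty_mem : (∅ : Set X) ∈ bounded
  bounded_subset : ∀ ⦃B C : Set X⦄, B ∈ bounded → C ⊆ B → C ∈ bounded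
  bounded_union : ∀ ⦃B C : Set X⦄, B ∈ bounded → C ∈ bounded → B ∪ C ∈ bounded
  compat : ∀ ⦃U : Set (X × X)⦄ ⦃B : Set X⦄, U ∈ entourages → B ∈ bounded →
    thick U B ∈ bounded

/-- A map between bornological coarse spaces is controlled if it maps entourages to
entourages. -/
def IsControlled {X X' : Type*} (S : BornCoarse X) (S' : BornCoarse X') (f : X → X') :
    Prop :=
  ∀ U ∈ S.entourages, (fun p : X × X => (f p.1, f p.2)) '' U ∈ S'.entourages

/-- A map between bornological coarse spaces is proper if preimages of bounded sets are
bounded. -/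
def IsProper {X X' : Type*} (S : BornCoarse X) (S' : BornCoarse X') (f : X → X') : Prop :=
  ∀ B ∈ S'.bounded, f ⁻¹' B ∈ S.bounded

/-- A morphism of bornological coarse spaces is a controlled and proper map. -/
def IsMorphism {X X' : Type*} (S : BornCoarse X) (S' : BornCoarse X') (f : X → X') : Prop :=
  IsControlled S S' f ∧ IsProper S S' f

noncomputable section

/-- The characteristic function of `B ⊆ X` as a bounded (continuous) function on the
discrete space `X`. -/
def chi {X : Type*} [TopologicalSpace X] [DiscreteTopology X] (B : Set X) :
    BoundedContinuousFunction X ℂ :=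
  BoundedContinuousFunction.ofNormedAddCommGroup (B.indicator fun _ => (1 : ℂ))
    continuous_of_discreteTopology 1 fun x => by
      by_cases hx : x ∈ B <;> simp [Set.indicator_apply, hx]

/-- A unital `*`-homomorphism from the `C*`-algebra `C(X)` of bounded functions on the
discrete space `X` into the bounded operators on the Hilbert space `H`. -/
abbrev CtrlRep (X : Type*) [TopologicalSpace X] [DiscreteTopology X] (H : Type*)
    [NormedAddCommGroup H] [InnerProductSpace ℂ H] [CompleteSpace H] :=
  BoundedContinuousFunction X ℂ →⋆ₐ[ℂ] (H →L[ℂ] H)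

section

variable {X : Type*} [TopologicalSpace X] [DiscreteTopology X]
variable {H : Type*} [NormedAddCommGroup H] [InnerProductSpace ℂ H] [CompleteSpace H]
variable {H' : Type*} [NormedAddCommGroup H'] [InnerProductSpace ℂ H'] [CompleteSpace H']

/-- `H(B) = φ(χ_B)H`, the subspace of vectors supported on `B`. -/
def Hsub (φ : CtrlRep X H) (B : Set X) : Set H :=
  Set.range ⇑(φ (chi B))

/-- `(H, φ)` is an `X`-controlled Hilbert space: `H(B)` is separable for every bounded
subset `B`. -/
def IsControlledHilbert (S : BornCoarse X) (φ : CtrlRep X H) : Prop :=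
  ∀ B ∈ S.bounded, TopologicalSpace.IsSeparable (Hsub φ B)

/-- A bounded operator has controlled propagation if there is an entourage `U` with
`A(H(B)) ⊆ H'(U[B])` for every bounded `B`. -/
def HasCtrlProp (S : BornCoarse X) (φ : CtrlRep X H) (φ' : CtrlRep X H')
    (A : H →L[ℂ] H') : Prop :=
  ∃ U ∈ S.entourages, ∀ B ∈ S.bounded, ⇑A '' Hsub φ B ⊆ Hsub φ' (thick U B)

/-- A bounded operator is quasi-local if there is an entourage `U` such that for every
`ε > 0` there is `n` with `‖φ'(χ_{B'}) A φ(χ_B)‖ ≤ ε` for all `Uⁿ`-separated `B, B'`. -/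
def IsQuasiLocal (S : BornCoarse X) (φ : CtrlRep X H) (φ' : CtrlRep X H')
    (A : H →L[ℂ] H') : Prop :=
  ∃ U ∈ S.entourages, ∀ ε : ℝ, 0 < ε → ∃ n : ℕ, ∀ B B' : Set X,
    thick (iterComp U n) B ∩ thick (iterComp U n) B' = ∅ →
      ‖φ' (chi B') ∘L A ∘L φ (chi B)‖ ≤ ε

/-- A bounded operator is locally compact if `φ(χ_B)A` and `Aφ(χ_B)` are compact for every
bounded `B`. -/
def IsLocallyCompactOp (S : BornCoarse X) (φ : CtrlRep X H) (A : H →L[ℂ] H) : Prop :=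
  ∀ B ∈ S.bounded,
    IsCompactOperator ⇑(φ (chi B) ∘L A) ∧ IsCompactOperator ⇑(A ∘L φ (chi B))

/-- A controlled Hilbert space is locally finite if `H(B)` is finite-dimensional for every
bounded `B`. -/
def IsLocallyFiniteRep (S : BornCoarse X) (φ : CtrlRep X H) : Prop :=
  ∀ B ∈ S.bounded, FiniteDimensional ℂ ↥(LinearMap.range (φ (chi B) : H →ₗ[ℂ] H))

/-- A controlled Hilbert space is ample if there is an entourage `U` such that `H(U[x])` is
infinite-dimensional for every point `x`. -/
def IsAmple (S : BornCoarse X) (φ : CtrlRep X H) : Prop :=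
  ∃ U ∈ S.entourages, ∀ x : X,
    ¬FiniteDimensional ℂ ↥(LinearMap.range (φ (chi (thick U {x})) : H →ₗ[ℂ] H))

/-- A closed subspace `K ⊆ H` is a locally finite subspace if it carries an `X`-control
making it a locally finite `X`-controlled Hilbert space such that the inclusion `K → H`
has controlled propagation. -/
def IsLocFinSubspace (S : BornCoarse X) (φ : CtrlRep X H) (K : Submodule ℂ H) : Prop :=
  ∃ hK : IsClosed (K : Set H),
    haveI : CompleteSpace K := hK.completeSpace_coe
    ∃ ψ : CtrlRep X ↥K, IsControlledHilbert S ψ ∧ IsLocallyFiniteRep S ψ ∧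
      HasCtrlProp S ψ φ K.subtypeL

end

end

universe u

/-- A witness for the existence of an ample `X`-controlled Hilbert space. -/
structure AmpleHilbertWitness {X : Type u} [TopologicalSpace X] [DiscreteTopology X]
    (S : BornCoarse X) where
  /-- the underlying Hilbert space -/
  H : Type u
  [grp : NormedAddCommGroup H]
  [ips : InnerProductSpace ℂ H]
  [cs : CompleteSpace H]
  /-- the `X`-control -/
  rep : CtrlRep X H
  controlled : IsControlledHilbert S rep
  ample : IsAmple S rep

section ChiLemmas

variable {X : Type*} [TopologicalSpace X] [DiscreteTopology X]

lemma chi_coe (B : Set X) : ⇑(chi B) = B.indicator (fun _ => (1 : ℂ)) := rfl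

lemma chi_apply_mem {B : Set X} {x : X} (hx : x ∈ B) : chi B x = 1 := by
  rw [chi_coe, Set.indicator_of_mem hx]

lemma chi_apply_not_mem {B : Set X} {x : X} (hx : x ∉ B) : chi B x = 0 := by
  rw [chi_coe, Set.indicator_of_notMem hx]

lemma chi_mul (A B : Set X) : chi A * chi B = chi (A ∩ B) := by
  ext x
  rw [BoundedContinuousFunction.coe_mul]
  by_cases hA : x ∈ A <;> by_cases hB : x ∈ B
  · rw [Pi.mul_apply, chi_apply_mem hA, chi_apply_mem hB, chi_apply_mem (Set.mem_inter hA hB), one_mul]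
  · rw [Pi.mul_apply, chi_apply_not_mem hB, chi_apply_not_mem (fun h => hB (Set.mem_of_mem_inter_right h)), mul_zero]
  · rw [Pi.mul_apply, chi_apply_not_mem hA, chi_apply_not_mem (fun h => hA (Set.mem_of_mem_inter_left h)), zero_mul]
  · rw [Pi.mul_apply, chi_apply_not_mem hA, chi_apply_not_mem (fun h => hA (Set.mem_of_mem_inter_left h)), zero_mul]

lemma star_chi (A : Set X) : star (chi A) = chi A := by
  ext x
  rw [BoundedContinuousFunction.coe_star, Pi.star_apply]
  by_cases hA : x ∈ A <;> simp [chi_apply_mem, chi_apply_not_mem, hA]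

lemma chi_empty : chi (∅ : Set X) = 0 := by
  ext x
  simp [chi_apply_not_mem (Set.notMem_empty x)]

end ChiLemmas
section ForwardAux

open scoped InnerProductSpace

variable {X : Type*} [TopologicalSpace X] [DiscreteTopology X]
variable {H : Type*} [NormedAddCommGroup H] [InnerProductSpace ℂ H] [CompleteSpace H]

lemma rep_comp (φ : CtrlRep X H) (f g : BoundedContinuousFunction X ℂ) (u : H) :
    φ f (φ g u) = φ (f * g) u := by
  rw [map_mul]; rfl

lemma rep_selfAdjoint_inner (φ : CtrlRep X H) (A : Set X) (u v : H) :
    ⟪φ (chi A) u, v⟫_ℂ = ⟪u, φ (chi A) v⟫_ℂ := by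
  have h1 : star (φ (chi A)) = φ (chi A) := by rw [← map_star, star_chi]
  conv_lhs => rw [← h1, ContinuousLinearMap.star_eq_adjoint]
  exact ContinuousLinearMap.adjoint_inner_left (φ (chi A)) v u

lemma rep_orth (φ : CtrlRep X H) {A A' : Set X} (h : A ∩ A' = ∅) (u v : H) :
    ⟪φ (chi A) u, φ (chi A') v⟫_ℂ = 0 := by
  rw [rep_selfAdjoint_inner, rep_comp, chi_mul, h, chi_empty, map_zero]
  simp

end ForwardAux

section Forward

open scoped InnerProductSpace

universe v

lemma forward_loc_countable {X : Type v} [TopologicalSpace X] [DiscreteTopology X]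
    (S : BornCoarse X) (w : AmpleHilbertWitness S) :
    ∃ V ∈ S.entourages, ∀ D : Set X,
      (∀ d ∈ D, ∀ d' ∈ D, d ≠ d' → (d', d) ∉ V) →
        ∀ B ∈ S.bounded, (D ∩ B).Countable := by
  classical
  letI := w.grp
  letI := w.ips
  letI := w.cs
  obtain ⟨U, hU, hample⟩ := w.ample
  refine ⟨relComp {p : X × X | (p.2, p.1) ∈ U} U, S.comp_mem (S.inv_mem hU) hU, ?_⟩
  intro D hsep B hB
  -- nonzero vectors in each H(U[{x}])
  have hvec : ∀ x : X, ∃ u : w.H, w.rep (chi (thick U {x})) u ≠ 0 := by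
    intro x
    by_contra h
    push_neg at h
    apply hample x
    have hz : w.rep (chi (thick U {x})) = 0 := ContinuousLinearMap.ext h
    rw [hz]
    have hr : LinearMap.range ((0 : w.H →L[ℂ] w.H) : w.H →ₗ[ℂ] w.H) = ⊥ := by
      ext z; simp [eq_comm]
    rw [hr]
    infer_instance
  choose u hu using fun d : ↥(D ∩ B) => hvec (d : X)
  set A : ↥(D ∩ B) → Set X := fun d => thick U {(d : X)} with hA
  set v : ↥(D ∩ B) → w.H :=
    fun d => ((‖w.rep (chi (A d)) (u d)‖ : ℂ))⁻¹ • w.rep (chi (A d)) (u d) with hv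
  -- disjointness of the thickenings
  have hdisj : ∀ d d' : ↥(D ∩ B), d ≠ d' → A d ∩ A d' = ∅ := by
    intro d d' hne
    rw [Set.eq_empty_iff_forall_notMem]
    rintro x ⟨⟨b, hb, hxb⟩, ⟨b', hb', hxb'⟩⟩
    rw [Set.mem_singleton_iff] at hb hb'
    subst hb; subst hb'
    have hdd : (d : X) ≠ (d' : X) := fun h => hne (Subtype.ext h)
    exact hsep (d : X) d.2.1 (d' : X) d'.2.1 hdd ⟨x, hxb', hxb⟩
  have hnorm : ∀ d, ‖v d‖ = 1 := by
    intro d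
    rw [hv]
    simp only [norm_smul, norm_inv, Complex.norm_real, norm_norm, Real.norm_eq_abs, abs_norm]
    exact inv_mul_cancel₀ (norm_ne_zero_iff.2 (hu d))
  have horth : ∀ d d' : ↥(D ∩ B), d ≠ d' → ⟪v d, v d'⟫_ℂ = 0 := by
    intro d d' hne
    rw [hv]
    simp only [inner_smul_left, inner_smul_right]
    rw [rep_orth w.rep (hdisj d d' hne)]
    simp
  have hsep1 : ∀ d d' : ↥(D ∩ B), d ≠ d' → (1 : ℝ) ≤ ‖v d - v d'‖ := by
    intro d d' hne
    have h2 : ‖v d - v d'‖ ^ 2 = 2 := by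
      rw [@norm_sub_sq ℂ, hnorm d, hnorm d', horth d d' hne]
      norm_num
    nlinarith [norm_nonneg (v d - v d'), h2]
  -- membership in the separable subspace
  have hmem : ∀ d, v d ∈ Hsub w.rep (thick U B) := by
    intro d
    have hsub : A d ⊆ thick U B := by
      rintro x ⟨b, hb, hxb⟩
      rw [Set.mem_singleton_iff] at hb
      subst hb
      exact ⟨(d : X), d.2.2, hxb⟩
    refine ⟨((‖w.rep (chi (A d)) (u d)‖ : ℂ))⁻¹ • w.rep (chi (A d)) (u d), ?_⟩
    rw [map_smul, rep_comp, chi_mul, Set.inter_eq_self_of_subset_right hsub]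
  obtain ⟨c, hcc, hcl⟩ := w.controlled (thick U B) (S.compat hU hB)
  have hyd : ∀ d : ↥(D ∩ B), ∃ y ∈ c, dist (v d) y < 1/2 := by
    intro d
    have := hcl (hmem d)
    rw [Metric.mem_closure_iff] at this
    exact this (1/2) (by norm_num)
  choose y hyc hyd2 using hyd
  have : Countable ↥c := hcc.to_subtype
  have hinj : Function.Injective (fun d : ↥(D ∩ B) => (⟨y d, hyc d⟩ : ↥c)) := by
    intro d d' h
    by_contra hne
    have h1 := hsep1 d d' hne
    have hyy : y d = y d' := congrArg Subtype.val h
    have := dist_triangle (v d) (y d) (v d')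
    rw [dist_eq_norm] at this
    have h3 := hyd2 d
    have h4 := hyd2 d'
    have h5 : dist (y d) (v d') = dist (v d') (y d') := by rw [hyy, dist_comm]
    rw [h5] at this
    linarith
  have : Countable ↥(D ∩ B) := hinj.countable
  exact Set.countable_coe_iff.mp this

end Forward
section MulOpSec

open scoped ENNReal InnerProductSpace

variable {ι : Type*}

lemma two_toReal : ((2 : ℝ≥0∞)).toReal = 2 := by norm_num

lemma memlp_mul (g : ι → ℂ) {C : ℝ} (hg : ∀ i, ‖g i‖ ≤ C) (v : lp (fun _ : ι => ℂ) 2) :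
    Memℓp (fun i => g i * v i) 2 := by
  apply memℓp_gen
  have hs := ((lp.memℓp v).summable
      (by rw [two_toReal]; norm_num)).mul_left (C ^ (2 : ℝ≥0∞).toReal)
  refine Summable.of_nonneg_of_le (fun i => Real.rpow_nonneg (norm_nonneg _) _)
    (fun i => ?_) hs
  rw [norm_mul, Real.mul_rpow (norm_nonneg _) (norm_nonneg _)]
  exact mul_le_mul_of_nonneg_right
    (Real.rpow_le_rpow (norm_nonneg _) (hg i) (by rw [two_toReal]; norm_num))
    (Real.rpow_nonneg (norm_nonneg _) _)

lemma mulOp_norm_le (g : ι → ℂ) {C : ℝ} (hC : 0 ≤ C) (hg : ∀ i, ‖g i‖ ≤ C)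
    (v : lp (fun _ : ι => ℂ) 2) :
    ‖(⟨fun i => g i * v i, memlp_mul g hg v⟩ : lp (fun _ : ι => ℂ) 2)‖ ≤ C * ‖v‖ := by
  have ht : (0:ℝ) < (2 : ℝ≥0∞).toReal := by rw [two_toReal]; norm_num
  by_contra hcon
  push_neg at hcon
  have h1 := lp.norm_rpow_eq_tsum ht
    (⟨fun i => g i * v i, memlp_mul g hg v⟩ : lp (fun _ : ι => ℂ) 2)
  have h2 : ∑' i, ‖g i * v i‖ ^ (2 : ℝ≥0∞).toReal ≤ (C * ‖v‖) ^ (2 : ℝ≥0∞).toReal := by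
    have hb : ∀ i, ‖g i * v i‖ ^ (2 : ℝ≥0∞).toReal
        ≤ C ^ (2 : ℝ≥0∞).toReal * ‖v i‖ ^ (2 : ℝ≥0∞).toReal := by
      intro i
      rw [norm_mul, Real.mul_rpow (norm_nonneg _) (norm_nonneg _)]
      exact mul_le_mul_of_nonneg_right
        (Real.rpow_le_rpow (norm_nonneg _) (hg i) ht.le)
        (Real.rpow_nonneg (norm_nonneg _) _)
    calc ∑' i, ‖g i * v i‖ ^ (2 : ℝ≥0∞).toReal
        ≤ ∑' i, C ^ (2 : ℝ≥0∞).toReal * ‖v i‖ ^ (2 : ℝ≥0∞).toReal := by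
          refine Summable.tsum_le_tsum hb ?_ ?_
          · exact (memlp_mul g hg v).summable ht
          · exact ((lp.memℓp v).summable ht).mul_left _
      _ = C ^ (2 : ℝ≥0∞).toReal * ∑' i, ‖v i‖ ^ (2 : ℝ≥0∞).toReal := tsum_mul_left
      _ = C ^ (2 : ℝ≥0∞).toReal * ‖v‖ ^ (2 : ℝ≥0∞).toReal := by
          rw [← lp.norm_rpow_eq_tsum ht v]
      _ = (C * ‖v‖) ^ (2 : ℝ≥0∞).toReal := (Real.mul_rpow hC (norm_nonneg v)).symm
  have h3 := Real.rpow_lt_rpow (by positivity) hcon ht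
  rw [← h1] at h2
  exact absurd h2 (not_le.2 h3)

/-- Multiplication by a bounded function as a continuous linear map on `ℓ²`. -/
noncomputable def mulOp (g : ι → ℂ) {C : ℝ} (hC : 0 ≤ C) (hg : ∀ i, ‖g i‖ ≤ C) :
    lp (fun _ : ι => ℂ) 2 →L[ℂ] lp (fun _ : ι => ℂ) 2 :=
  LinearMap.mkContinuous
    { toFun := fun v => ⟨fun i => g i * v i, memlp_mul g hg v⟩
      map_add' := fun v w => by
        apply lp.ext
        funext i
        simp only [lp.coeFn_add, Pi.add_apply]
        exact mul_add _ _ _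
      map_smul' := fun c v => by
        apply lp.ext
        funext i
        simp only [lp.coeFn_smul, Pi.smul_apply, RingHom.id_apply, smul_eq_mul]
        ring }
    C (fun v => mulOp_norm_le g hC hg v)

lemma mulOp_apply (g : ι → ℂ) {C : ℝ} (hC : 0 ≤ C) (hg : ∀ i, ‖g i‖ ≤ C)
    (v : lp (fun _ : ι => ℂ) 2) (i : ι) :
    mulOp g hC hg v i = g i * v i := rfl

end MulOpSec
section MultRepSec

set_option linter.unusedVariables false
set_option linter.unusedSectionVars false

open scoped ENNReal InnerProductSpace

variable {X : Type*} [TopologicalSpace X] [DiscreteTopology X]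

noncomputable def multOpOf (D : Set X) (f : BoundedContinuousFunction X ℂ) :
    lp (fun _ : ↥D × ℕ => ℂ) 2 →L[ℂ] lp (fun _ : ↥D × ℕ => ℂ) 2 :=
  mulOp (fun i : ↥D × ℕ => f (i.1 : X)) (norm_nonneg f) (fun i => f.norm_coe_le_norm _)

lemma multOpOf_apply (D : Set X) (f : BoundedContinuousFunction X ℂ)
    (v : lp (fun _ : ↥D × ℕ => ℂ) 2) (i : ↥D × ℕ) :
    multOpOf D f v i = f (i.1 : X) * v i := rfl

lemma multOpOf_one (D : Set X) : multOpOf D 1 = 1 := by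
  refine ContinuousLinearMap.ext fun v => lp.ext (funext fun i => ?_)
  simp [multOpOf_apply]

lemma multOpOf_mul (D : Set X) (f g : BoundedContinuousFunction X ℂ) :
    multOpOf D (f * g) = multOpOf D f * multOpOf D g := by
  refine ContinuousLinearMap.ext fun v => lp.ext (funext fun i => ?_)
  rw [ContinuousLinearMap.mul_apply]
  simp only [multOpOf_apply, BoundedContinuousFunction.coe_mul, Pi.mul_apply]
  ring

lemma multOpOf_zero (D : Set X) : multOpOf D 0 = 0 := by
  refine ContinuousLinearMap.ext fun v => lp.ext (funext fun i => ?_)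
  simp only [multOpOf_apply, BoundedContinuousFunction.coe_zero, Pi.zero_apply, zero_mul,
    ContinuousLinearMap.zero_apply, lp.coeFn_zero, Pi.zero_apply]

lemma multOpOf_add (D : Set X) (f g : BoundedContinuousFunction X ℂ) :
    multOpOf D (f + g) = multOpOf D f + multOpOf D g := by
  refine ContinuousLinearMap.ext fun v => lp.ext (funext fun i => ?_)
  rw [ContinuousLinearMap.add_apply]
  simp only [multOpOf_apply, BoundedContinuousFunction.coe_add, Pi.add_apply, lp.coeFn_add]
  ring

lemma multOpOf_algebraMap (D : Set X) (c : ℂ) :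
    multOpOf D (algebraMap ℂ (BoundedContinuousFunction X ℂ) c)
      = algebraMap ℂ (lp (fun _ : ↥D × ℕ => ℂ) 2 →L[ℂ] lp (fun _ : ↥D × ℕ => ℂ) 2) c := by
  refine ContinuousLinearMap.ext fun v => lp.ext (funext fun i => ?_)
  rw [Algebra.algebraMap_eq_smul_one, Algebra.algebraMap_eq_smul_one]
  simp only [multOpOf_apply, BoundedContinuousFunction.coe_smul, BoundedContinuousFunction.coe_one,
    Pi.smul_apply, Pi.one_apply, smul_eq_mul, mul_one, ContinuousLinearMap.smul_apply,
    ContinuousLinearMap.one_apply, lp.coeFn_smul]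

lemma multOpOf_star (D : Set X) (f : BoundedContinuousFunction X ℂ) :
    multOpOf D (star f) = star (multOpOf D f) := by
  rw [ContinuousLinearMap.star_eq_adjoint]
  refine (ContinuousLinearMap.eq_adjoint_iff _ _).mpr fun x y => ?_
  rw [lp.inner_eq_tsum, lp.inner_eq_tsum]
  refine tsum_congr fun i => ?_
  simp only [multOpOf_apply, RCLike.inner_apply, BoundedContinuousFunction.coe_star,
    Pi.star_apply, starRingEnd_apply, star_mul', star_star]
  ring

/-- The multiplication representation of `C(X)` on `ℓ²(D × ℕ)`. -/
noncomputable def multRep (D : Set X) : CtrlRep X (lp (fun _ : ↥D × ℕ => ℂ) 2) :=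
  { toFun := multOpOf D
    map_one' := multOpOf_one D
    map_mul' := multOpOf_mul D
    map_zero' := multOpOf_zero D
    map_add' := multOpOf_add D
    commutes' := multOpOf_algebraMap D
    map_star' := multOpOf_star D }

lemma multRep_apply (D : Set X) (f : BoundedContinuousFunction X ℂ)
    (v : lp (fun _ : ↥D × ℕ => ℂ) 2) (i : ↥D × ℕ) :
    multRep D f v i = f (i.1 : X) * v i := rfl

end MultRepSec
section MultRepCtrl

set_option linter.unusedVariables false
set_option linter.unusedSectionVars false

open scoped ENNReal InnerProductSpace

variable {X : Type*} [TopologicalSpace X] [DiscreteTopology X]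

lemma multRep_controlled (S : BornCoarse X) (D : Set X)
    (hD : ∀ B ∈ S.bounded, (D ∩ B).Countable) :
    IsControlledHilbert S (multRep D) := by
  classical
  intro B hB
  set c : Set (↥D × ℕ) := {i | (i.1 : X) ∈ B} with hc
  have hcc : c.Countable := by
    have h1 : Countable ↥(D ∩ B) := (hD B hB).to_subtype
    have hinj : Function.Injective (fun i : ↥c =>
        ((⟨(i.1.1 : X), ⟨(i.1.1).2, i.2⟩⟩ : ↥(D ∩ B)), i.1.2)) := by
      intro i j h
      simp only [Prod.mk.injEq, Subtype.mk.injEq] at h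
      obtain ⟨h3, h4⟩ := h
      exact Subtype.ext (Prod.ext (Subtype.ext (Subtype.ext_iff.mp h3 :)) h4)
    exact Set.countable_coe_iff.mp hinj.countable
  have hsep : TopologicalSpace.IsSeparable
      (closure (Submodule.span ℂ ((fun i => lp.single 2 i (1 : ℂ)) '' c) :
        Set (lp (fun _ : ↥D × ℕ => ℂ) 2))) :=
    ((hcc.image _).isSeparable.span).closure
  refine hsep.mono ?_
  rintro w ⟨v, rfl⟩
  have hsum := lp.hasSum_single (by norm_num : (2 : ℝ≥0∞) ≠ ⊤) (multRep D (chi B) v)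
  refine mem_closure_of_tendsto hsum (Filter.Eventually.of_forall fun s => ?_)
  refine Submodule.sum_mem _ fun i hi => ?_
  by_cases hic : i ∈ c
  · have h1 : (lp.single 2 i (multRep D (chi B) v i) : lp (fun _ : ↥D × ℕ => ℂ) 2)
        = (multRep D (chi B) v i) • (lp.single 2 i (1 : ℂ) : lp (fun _ : ↥D × ℕ => ℂ) 2) := by
      rw [← lp.single_smul]
      congr 1
      simp
    rw [h1]
    exact Submodule.smul_mem _ _ (Submodule.subset_span ⟨i, hic, rfl⟩)
  · have hicB : (i.1 : X) ∉ B := hic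
    have h1 : multRep D (chi B) v i = 0 := by
      rw [multRep_apply, chi_apply_not_mem hicB, zero_mul]
    rw [h1]
    have h2 : (lp.single 2 i (0 : ℂ) : lp (fun _ : ↥D × ℕ => ℂ) 2) = 0 := by
      apply lp.ext
      funext j
      by_cases hj : j = i
      · subst hj; rw [lp.single_apply_self]; rfl
      · rw [lp.single_apply_ne 2 i _ hj]; rfl
    rw [h2]
    exact Submodule.zero_mem _

lemma multRep_ample (S : BornCoarse X) (D : Set X) (V : Set (X × X)) (hV : V ∈ S.entourages)
    (hcov : ∀ x : X, ∃ d : ↥D, ((d : X), x) ∈ V) :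
    IsAmple S (multRep D) := by
  classical
  refine ⟨V, hV, fun x => ?_⟩
  obtain ⟨d, hd⟩ := hcov x
  have hdm : (d : X) ∈ thick V {x} := ⟨x, rfl, hd⟩
  set e : ℕ → lp (fun _ : ↥D × ℕ => ℂ) 2 := fun n => lp.single 2 (d, n) (1 : ℂ) with he
  have hmem : ∀ n, e n ∈ LinearMap.range (multRep D (chi (thick V {x})) : lp (fun _ : ↥D × ℕ => ℂ) 2 →ₗ[ℂ] lp (fun _ : ↥D × ℕ => ℂ) 2) := by
    intro n
    refine ⟨e n, ?_⟩
    apply lp.ext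
    funext i
    change multRep D (chi (thick V {x})) (e n) i = (e n) i; rw [multRep_apply]
    by_cases hi : i = (d, n)
    · subst hi
      rw [chi_apply_mem hdm, one_mul]
    · rw [he]
      simp only
      rw [lp.single_apply_ne 2 (d, n) _ hi, mul_zero]
  have hon : Orthonormal ℂ e := by
    constructor
    · intro n
      have := lp.norm_single (p := 2) (by norm_num)
        (E := fun _ : ↥D × ℕ => ℂ) (d, n) (1 : ℂ)
      simpa [he] using this
    · intro n m hnm
      rw [he]
      simp only
      rw [lp.inner_single_left]
      have : ((d, m) : ↥D × ℕ) ≠ (d, n) := fun h => hnm (Prod.ext_iff.mp h).2.symm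
      rw [lp.single_apply_ne 2 (d, m) _ (Ne.symm this)]
      simp
  intro hfd
  set R := LinearMap.range (multRep D (chi (thick V {x})) : lp (fun _ : ↥D × ℕ => ℂ) 2 →ₗ[ℂ] lp (fun _ : ↥D × ℕ => ℂ) 2)
  have hli : LinearIndependent ℂ (fun n => (⟨e n, hmem n⟩ : ↥R)) := by
    apply LinearIndependent.of_comp R.subtype
    exact hon.linearIndependent
  have : Finite ℕ := hli.finite
  exact @not_finite ℕ _ this

end MultRepCtrl
section Backward

set_option linter.unusedSectionVars false

universe w

variable {X : Type w} [TopologicalSpace X] [DiscreteTopology X]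

lemma exists_maximal_separated (V : Set (X × X)) :
    ∃ D : Set X, (∀ d ∈ D, ∀ d' ∈ D, d ≠ d' → (d', d) ∉ V) ∧
      ∀ E : Set X, (∀ d ∈ E, ∀ d' ∈ E, d ≠ d' → (d', d) ∉ V) → D ⊆ E → E ⊆ D := by
  have hzorn : ∀ ch ⊆ {E : Set X | ∀ d ∈ E, ∀ d' ∈ E, d ≠ d' → (d', d) ∉ V},
      IsChain (· ⊆ ·) ch → ∃ ub ∈ {E : Set X | ∀ d ∈ E, ∀ d' ∈ E, d ≠ d' → (d', d) ∉ V},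
        ∀ s ∈ ch, s ⊆ ub := by
    intro ch hch hchain
    refine ⟨⋃₀ ch, ?_, fun s hs => Set.subset_sUnion_of_mem hs⟩
    rintro d ⟨s, hs, hds⟩ d' ⟨t, ht, hdt⟩ hne
    rcases hchain.total hs ht with h | h
    · exact hch ht d (h hds) d' hdt hne
    · exact hch hs d hds d' (h hdt) hne
  obtain ⟨m, hm⟩ := zorn_subset {E : Set X | ∀ d ∈ E, ∀ d' ∈ E, d ≠ d' → (d', d) ∉ V} hzorn
  exact ⟨m, hm.prop, fun E hE hDE => hm.2 hE hDE⟩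

lemma backward_ample (S : BornCoarse X)
    (h : ∃ V ∈ S.entourages, ∀ D : Set X,
      (∀ d ∈ D, ∀ d' ∈ D, d ≠ d' → (d', d) ∉ V) →
        ∀ B ∈ S.bounded, (D ∩ B).Countable) :
    Nonempty (AmpleHilbertWitness S) := by
  classical
  obtain ⟨V0, hV0, hloc⟩ := h
  set V : Set (X × X) := V0 ∪ ({p : X × X | (p.2, p.1) ∈ V0} ∪ {p : X × X | p.1 = p.2})
    with hVdef
  have hV : V ∈ S.entourages :=
    S.union_mem hV0 (S.union_mem (S.inv_mem hV0) S.diag_mem)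
  have hVsymm : ∀ p : X × X, p ∈ V → (p.2, p.1) ∈ V := by
    rintro ⟨a, b⟩ hab
    rcases hab with h | h | h
    · exact Or.inr (Or.inl h)
    · exact Or.inl h
    · exact Or.inr (Or.inr h.symm)
  have hVrefl : ∀ x : X, (x, x) ∈ V := fun x => Or.inr (Or.inr rfl)
  obtain ⟨D, hDsep, hDmax⟩ := exists_maximal_separated V
  have hDlc : ∀ B ∈ S.bounded, (D ∩ B).Countable := by
    refine hloc D fun d hd d' hd' hne hdV0 => ?_
    exact hDsep d hd d' hd' hne (Or.inl hdV0)
  have hcov : ∀ x : X, ∃ d : ↥D, ((d : X), x) ∈ V := by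
    intro x
    by_cases hx : x ∈ D
    · exact ⟨⟨x, hx⟩, hVrefl x⟩
    · by_contra hcon
      push_neg at hcon
      have hsepx : ∀ d ∈ insert x D, ∀ d' ∈ insert x D, d ≠ d' → (d', d) ∉ V := by
        intro d hd d' hd' hne hdV
        rcases hd with rfl | hd
        · rcases hd' with rfl | hd'
          · exact hne rfl
          · exact hcon ⟨d', hd'⟩ hdV
        · rcases hd' with rfl | hd'
          · exact hcon ⟨d, hd⟩ (hVsymm _ hdV)
          · exact hDsep d hd d' hd' hne hdV
      have := hDmax (insert x D) hsepx (Set.subset_insert x D)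
      exact hx (this (Set.mem_insert x D))
  refine ⟨{ H := lp (fun _ : ↥D × ℕ => ℂ) 2
            grp := inferInstance
            ips := inferInstance
            cs := inferInstance
            rep := multRep D
            controlled := multRep_controlled S D hDlc
            ample := multRep_ample S D V hV hcov }⟩

end Backward
/-- A bornological coarse space admits an ample `X`-controlled Hilbert space if and only if
it is locally countable, i.e. there is an entourage `V` such that every `V`-separated
subset of `X` is locally countable. -/
theorem exists_ample_iff_locallyCountable {X : Type u} [TopologicalSpace X]
    [DiscreteTopology X] (S : BornCoarse X) :
    Nonempty (AmpleHilbertWitness S) ↔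
      ∃ V ∈ S.entourages, ∀ D : Set X,
        (∀ d ∈ D, ∀ d' ∈ D, d ≠ d' → (d', d) ∉ V) →
          ∀ B ∈ S.bounded, (D ∩ B).Countable := by
  constructor
  · rintro ⟨w⟩
    exact forward_loc_countable S w
  · exact backward_ample S
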